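/- arXiv:2003.11324 — 2 statements merged into one kernel-verified Lean document; each statement's English description precedes it below -/
import Mathlib

section
/- Let n ≥ 8 and let H ≤ S_n be a subgroup that stabilizes the set {n−1, n} setwise (i.e., h·{n−1,n} = {n−1,n} for all h ∈ H). Let d be an integer with 3 ≤ d ≤ (n−2)/2 such that O_2(H) = O_3(H) = ⋯ = O_d(H). Then H acts d-homogeneously on {1,…,n−2}. -/
open Pointwise

/-- The number of orbits of a group `H` acting on a finite set `Ω` on the collection
of finsets of `Ω` satisfying the predicate `P` (for the induced action on finsets). -/
noncomputable def numOrbits (H : Type*) [Group H] {Ω : Type*} [DecidableEq Ω] [MulAction H Ω]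
    (P : Finset Ω → Prop) : ℕ :=
  Nat.card (Quot (fun S T : {S : Finset Ω // P S} => ∃ h : H, h • S.val = T.val))

/-- A subgroup `H` of `Sym(Ω)` acts `d`-homogeneously on `A ⊆ Ω` if it is
transitive on `d`-element subsets of `A`. -/
def IsHomogeneousOn {Ω : Type*} [DecidableEq Ω] (H : Subgroup (Equiv.Perm Ω))
    (A : Finset Ω) (d : ℕ) : Prop :=
  ∀ S T : Finset Ω, S ⊆ A → T ⊆ A → S.card = d → T.card = d → ∃ h ∈ H, h • S = T

section Infrastructure

open Finset

lemma card_quot_le_of_surj {α β : Type*} [Finite α] (r : α → α → Prop) (s : β → β → Prop)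
    (f : α → β) (hsound : ∀ x y, r x y → s (f x) (f y))
    (hsurj : ∀ y : β, ∃ x, s (f x) y) :
    Nat.card (Quot s) ≤ Nat.card (Quot r) := by
  have hs : Function.Surjective (Quot.lift (fun x => Quot.mk s (f x))
      (fun x y h => Quot.sound (hsound x y h)) : Quot r → Quot s) := by
    intro q
    induction q using Quot.ind with
    | _ y =>
      obtain ⟨x, hx⟩ := hsurj y
      exact ⟨Quot.mk r x, Quot.sound hx⟩
  exact Nat.card_le_card_of_surjective _ hs

lemma card_quot_le_of_inj {α β : Type*} [Finite β] (r : α → α → Prop) (s : β → β → Prop)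
    (hs : Equivalence s) (f : α → β)
    (hsound : ∀ x y, r x y → s (f x) (f y))
    (hinj : ∀ x y, s (f x) (f y) → Quot.mk r x = Quot.mk r y) :
    Nat.card (Quot r) ≤ Nat.card (Quot s) := by
  have hi : Function.Injective (Quot.lift (fun x => Quot.mk s (f x))
      (fun x y h => Quot.sound (hsound x y h)) : Quot r → Quot s) := by
    intro q q'
    induction q using Quot.ind with
    | _ x =>
      induction q' using Quot.ind with
      | _ y =>
        intro h
        exact hinj x y (hs.eqvGen_iff.mp (Quot.eq.mp h))
  exact Nat.card_le_card_of_injective _ hi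


variable {Ω : Type*} [DecidableEq Ω] (G : Type*) [Group G] [MulAction G Ω]

def orbRel (P : Finset Ω → Prop) : {S : Finset Ω // P S} → {S : Finset Ω // P S} → Prop :=
  fun S T => ∃ h : G, h • S.val = T.val

lemma numOrbits_eq (P : Finset Ω → Prop) : numOrbits G P = Nat.card (Quot (orbRel G P)) := rfl

lemma smul_finset_compl [Fintype Ω] (g : G) (S : Finset Ω) : g • Sᶜ = (g • S)ᶜ := by
  ext x
  have h1 : ∀ T : Finset Ω, x ∈ g • T ↔ g⁻¹ • x ∈ T := by
    intro T
    constructor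
    · intro h
      obtain ⟨y, hy, rfl⟩ := Finset.mem_smul_finset.mp h
      simpa using hy
    · intro h
      have := Finset.smul_mem_smul_finset (a := g) h
      simpa using this
  rw [Finset.mem_compl, h1, h1, Finset.mem_compl]

lemma orbRel_equivalence (P : Finset Ω → Prop) : Equivalence (orbRel G (Ω := Ω) P) := by
  constructor
  · exact fun S => ⟨1, one_smul _ _⟩
  · rintro S T ⟨g, hg⟩
    exact ⟨g⁻¹, by rw [← hg, inv_smul_smul]⟩
  · rintro S T U ⟨g, hg⟩ ⟨g', hg'⟩
    exact ⟨g' * g, by rw [mul_smul, hg, hg']⟩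

lemma orbEq_of_numOrbits_eq_one (P : Finset Ω → Prop) (h1 : numOrbits G P = 1)
    {S T : Finset Ω} (hS : P S) (hT : P T) : ∃ g : G, g • S = T := by
  rw [numOrbits_eq] at h1
  haveI := (Nat.card_eq_one_iff_unique.mp h1).1
  have heq : Quot.mk (orbRel G P) ⟨S, hS⟩ = Quot.mk _ ⟨T, hT⟩ := Subsingleton.elim _ _
  exact ((orbRel_equivalence G P).eqvGen_iff).mp (Quot.eq.mp heq)

lemma numOrbits_false : numOrbits G (fun _ : Finset Ω => False) = 0 := by
  rw [numOrbits_eq]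
  haveI : IsEmpty (Quot (orbRel G (fun _ : Finset Ω => False))) := by
    constructor
    intro q
    induction q using Quot.ind with
    | _ s => exact s.2.elim
  exact Nat.card_of_isEmpty

lemma numOrbits_partition [Fintype Ω] (P P₀ P₁ P₂ : Finset Ω → Prop)
    (hcov : ∀ S, P S ↔ P₀ S ∨ P₁ S ∨ P₂ S)
    (h01 : ∀ S, P₀ S → P₁ S → False)
    (h02 : ∀ S, P₀ S → P₂ S → False)
    (h12 : ∀ S, P₁ S → P₂ S → False)
    (hinv₀ : ∀ (g : G) S, P₀ S → P₀ (g • S))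
    (hinv₁ : ∀ (g : G) S, P₁ S → P₁ (g • S))
    (hinv₂ : ∀ (g : G) S, P₂ S → P₂ (g • S)) :
    numOrbits G P = numOrbits G P₀ + numOrbits G P₁ + numOrbits G P₂ := by
  classical
  have hiff : ∀ (Q : Finset Ω → Prop), (∀ (g : G) S, Q S → Q (g • S)) →
      ∀ (g : G) (S T : Finset Ω), g • S = T → (Q S ↔ Q T) := by
    intro Q hQ g S T hg
    constructor
    · intro h; exact hg ▸ hQ g S h
    · intro h
      have := hQ g⁻¹ T h
      rwa [← hg, inv_smul_smul] at this
  let f : {S : Finset Ω // P S} →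
      Quot (orbRel G P₀) ⊕ (Quot (orbRel G P₁) ⊕ Quot (orbRel G P₂)) :=
    fun S => if h0 : P₀ S.val then Sum.inl (Quot.mk _ ⟨S.val, h0⟩)
      else if h1 : P₁ S.val then Sum.inr (Sum.inl (Quot.mk _ ⟨S.val, h1⟩))
      else Sum.inr (Sum.inr (Quot.mk _
        ⟨S.val, (((hcov S.val).mp S.2).resolve_left h0).resolve_left h1⟩))
  have hfsound : ∀ S T, orbRel G P S T → f S = f T := by
    rintro ⟨S, hS⟩ ⟨T, hT⟩ ⟨g, hg⟩
    simp only at hg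
    have e0 := hiff P₀ hinv₀ g S T hg
    have e1 := hiff P₁ hinv₁ g S T hg
    simp only [f]
    by_cases h0 : P₀ S
    · rw [dif_pos h0, dif_pos (e0.mp h0)]
      exact congrArg _ (Quot.sound ⟨g, hg⟩)
    · rw [dif_neg h0, dif_neg (fun h => h0 (e0.mpr h))]
      by_cases h1 : P₁ S
      · rw [dif_pos h1, dif_pos (e1.mp h1)]
        exact congrArg _ (congrArg _ (Quot.sound ⟨g, hg⟩))
      · rw [dif_neg h1, dif_neg (fun h => h1 (e1.mpr h))]
        exact congrArg _ (congrArg _ (Quot.sound ⟨g, hg⟩))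
  let e : Quot (orbRel G P) ≃
      (Quot (orbRel G P₀) ⊕ (Quot (orbRel G P₁) ⊕ Quot (orbRel G P₂))) :=
    { toFun := Quot.lift f hfsound
      invFun := Sum.elim
        (Quot.lift (fun S => Quot.mk (orbRel G P) ⟨S.val, (hcov S.val).mpr (Or.inl S.2)⟩)
          (fun S T h => Quot.sound h))
        (Sum.elim
          (Quot.lift (fun S => Quot.mk (orbRel G P)
              ⟨S.val, (hcov S.val).mpr (Or.inr (Or.inl S.2))⟩)
            (fun S T h => Quot.sound h))
          (Quot.lift (fun S => Quot.mk (orbRel G P)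
              ⟨S.val, (hcov S.val).mpr (Or.inr (Or.inr S.2))⟩)
            (fun S T h => Quot.sound h)))
      left_inv := by
        intro q
        induction q using Quot.ind with
        | _ S =>
          show Sum.elim _ _ (f S) = _
          by_cases h0 : P₀ S.val
          · simp only [f, dif_pos h0, Sum.elim_inl]
          · by_cases h1 : P₁ S.val
            · simp only [f, dif_neg h0, dif_pos h1, Sum.elim_inr, Sum.elim_inl]
            · simp only [f, dif_neg h0, dif_neg h1, Sum.elim_inr]
      right_inv := by
        rintro (q | q | q)
        · induction q using Quot.ind with
          | _ S =>
            show f _ = _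
            simp only [f]
            rw [dif_pos S.2]
        · induction q using Quot.ind with
          | _ S =>
            show f _ = _
            simp only [f]
            rw [dif_neg (fun h => h01 S.val h S.2), dif_pos S.2]
        · induction q using Quot.ind with
          | _ S =>
            show f _ = _
            simp only [f]
            rw [dif_neg (fun h => h02 S.val h S.2), dif_neg (fun h => h12 S.val h S.2)] }
  rw [numOrbits_eq, numOrbits_eq, numOrbits_eq, numOrbits_eq, Nat.card_congr e,
    Nat.card_sum, Nat.card_sum, add_assoc]

lemma smul_finset_erase (g : G) (S : Finset Ω) (x : Ω) :
    g • S.erase x = (g • S).erase (g • x) := by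
  rw [erase_eq, erase_eq, smul_finset_sdiff, smul_finset_singleton]

lemma numOrbits_mono [Fintype Ω] (A : Finset Ω) (hA : ∀ g : G, g • A = A)
    (R : Finset Ω → Prop) (hR : ∀ (g : G) (C : Finset Ω), R C → R (g • C))
    (m : ℕ) (hm : 2 * m < A.card) :
    numOrbits G (fun S => (S ∩ A).card = m ∧ R (S \ A))
      ≤ numOrbits G (fun S => (S ∩ A).card = m + 1 ∧ R (S \ A)) := by
  classical
  set P : ℕ → Finset Ω → Prop := fun m S => (S ∩ A).card = m ∧ R (S \ A) with hP
  set 𝒮 : ℕ → Finset (Finset Ω) := fun m => univ.filter (P m) with h𝒮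
  have mem𝒮 : ∀ {m S}, S ∈ 𝒮 m ↔ P m S := by
    intro m S; simp [h𝒮, mem_filter]
  set Uop : (Finset Ω → ℚ) → Finset Ω → ℚ :=
    fun f S => ∑ x ∈ S ∩ A, f (S.erase x) with hU
  set Dop : (Finset Ω → ℚ) → Finset Ω → ℚ :=
    fun f S => ∑ x ∈ A \ S, f (insert x S) with hD
  -- adjointness
  have hadj : ∀ (m' : ℕ) (f g : Finset Ω → ℚ),
      ∑ S ∈ 𝒮 (m' + 1), Uop f S * g S = ∑ T ∈ 𝒮 m', f T * Dop g T := by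
    intro m' f g
    have l1 : ∀ S ∈ 𝒮 (m' + 1), Uop f S * g S = ∑ x ∈ S ∩ A, f (S.erase x) * g S := by
      intro S _; rw [hU]; exact Finset.sum_mul _ _ _
    have r1 : ∀ T ∈ 𝒮 m', f T * Dop g T = ∑ x ∈ A \ T, f T * g (insert x T) := by
      intro T _; rw [hD]; exact Finset.mul_sum _ _ _
    rw [Finset.sum_congr rfl l1, Finset.sum_congr rfl r1, Finset.sum_sigma', Finset.sum_sigma']
    refine Finset.sum_nbij' (fun p => ⟨p.1.erase p.2, p.2⟩) (fun p => ⟨insert p.2 p.1, p.2⟩)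
      ?_ ?_ ?_ ?_ ?_
    · rintro ⟨S, x⟩ hp
      rw [Finset.mem_sigma] at hp ⊢
      obtain ⟨hS, hx⟩ := hp
      rw [mem𝒮] at hS
      rw [mem_inter] at hx
      constructor
      · rw [mem𝒮]
        constructor
        · rw [erase_inter, card_erase_of_mem (mem_inter.mpr hx), hS.1]
          omega
        · rw [erase_sdiff_comm]
          rw [erase_eq_of_notMem (by simp [hx.2])]
          exact hS.2
      · simp [mem_sdiff, hx.2, mem_erase]
    · rintro ⟨T, x⟩ hp
      rw [Finset.mem_sigma] at hp ⊢
      obtain ⟨hT, hx⟩ := hp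
      rw [mem𝒮] at hT
      rw [mem_sdiff] at hx
      constructor
      · rw [mem𝒮]
        constructor
        · rw [insert_inter_of_mem hx.1, card_insert_of_notMem (fun h => hx.2 (mem_inter.mp h).1),
            hT.1]
        · rw [insert_sdiff_of_mem _ hx.1]
          exact hT.2
      · simp [mem_inter, hx.1]
    · rintro ⟨S, x⟩ hp
      rw [Finset.mem_sigma] at hp
      have hx := mem_inter.mp hp.2
      exact congrArg (fun t => (⟨t, x⟩ : Σ _ : Finset Ω, Ω)) (insert_erase hx.1)
    · rintro ⟨T, x⟩ hp
      rw [Finset.mem_sigma] at hp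
      have hx := mem_sdiff.mp hp.2
      exact congrArg (fun t => (⟨t, x⟩ : Σ _ : Finset Ω, Ω)) (erase_insert hx.2)
    · rintro ⟨S, x⟩ hp
      rw [Finset.mem_sigma] at hp
      have hx := mem_inter.mp hp.2
      simp only []
      rw [insert_erase hx.1]
  -- commutator identity
  have hcomm : ∀ (f : Finset Ω → ℚ) (S : Finset Ω), (S ∩ A).card = m →
      Dop (Uop f) S = Uop (Dop f) S + ((A.card : ℚ) - 2 * m) * f S := by
    intro f S hS
    have hDU : Dop (Uop f) S = ((A \ S).card : ℚ) * f S
        + ∑ x ∈ A \ S, ∑ y ∈ S ∩ A, f (insert x (S.erase y)) := by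
      rw [hD]
      dsimp only
      have inner : ∀ x ∈ A \ S, Uop f (insert x S)
          = f S + ∑ y ∈ S ∩ A, f (insert x (S.erase y)) := by
        intro x hx
        rw [mem_sdiff] at hx
        rw [hU]
        dsimp only
        rw [insert_inter_of_mem hx.1,
          Finset.sum_insert (fun h => hx.2 (mem_inter.mp h).1), erase_insert hx.2]
        congr 1
        refine Finset.sum_congr rfl (fun y hy => ?_)
        have hxy : x ≠ y := fun h => hx.2 (h ▸ (mem_inter.mp hy).1)
        rw [erase_insert_of_ne hxy]
      rw [Finset.sum_congr rfl inner, Finset.sum_add_distrib, Finset.sum_const,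
        nsmul_eq_mul]
    have hUD : Uop (Dop f) S = ((S ∩ A).card : ℚ) * f S
        + ∑ y ∈ S ∩ A, ∑ x ∈ A \ S, f (insert x (S.erase y)) := by
      rw [hU]
      dsimp only
      have inner : ∀ y ∈ S ∩ A, Dop f (S.erase y)
          = f S + ∑ x ∈ A \ S, f (insert x (S.erase y)) := by
        intro y hy
        rw [mem_inter] at hy
        rw [hD]
        dsimp only
        rw [sdiff_erase hy.2, Finset.sum_insert (fun h => (mem_sdiff.mp h).2 hy.1),
          insert_erase hy.1]
      rw [Finset.sum_congr rfl inner, Finset.sum_add_distrib, Finset.sum_const,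
        nsmul_eq_mul]
    have hswap : ∑ x ∈ A \ S, ∑ y ∈ S ∩ A, f (insert x (S.erase y))
        = ∑ y ∈ S ∩ A, ∑ x ∈ A \ S, f (insert x (S.erase y)) := Finset.sum_comm
    have hcardAS : ((A \ S).card : ℚ) = (A.card : ℚ) - m := by
      have h1 : (A \ S).card + (A ∩ S).card = A.card := card_sdiff_add_card_inter A S
      have h2 : (A ∩ S).card = m := by rw [inter_comm]; exact hS
      have : (A \ S).card + m = A.card := by omega
      push_cast [← this]
      ring
    rw [hDU, hUD, hswap, hcardAS, hS]
    ring
  -- key vanishing propagation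
  have hkey : ∀ F : Finset Ω → ℚ, (∀ S, P (m+1) S → Uop F S = 0) →
      ∀ S, P m S → F S = 0 := by
    intro F hvan S₀ hS₀
    have e1 : ∑ S ∈ 𝒮 (m+1), Uop F S * Uop F S = ∑ T ∈ 𝒮 m, F T * Dop (Uop F) T :=
      hadj m F (Uop F)
    have e1' : ∑ S ∈ 𝒮 (m+1), Uop F S * Uop F S = 0 :=
      Finset.sum_eq_zero (fun S hS => by rw [hvan S (mem𝒮.mp hS)]; ring)
    have e4 : ∑ T ∈ 𝒮 m, F T * Dop (Uop F) T = 0 := by rw [← e1, e1']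
    have e2 : ∑ T ∈ 𝒮 m, F T * Dop (Uop F) T
        = ∑ T ∈ 𝒮 m, F T * Uop (Dop F) T
          + ((A.card : ℚ) - 2*m) * ∑ T ∈ 𝒮 m, F T * F T := by
      rw [Finset.mul_sum, ← Finset.sum_add_distrib]
      refine Finset.sum_congr rfl (fun T hT => ?_)
      rw [hcomm F T (mem𝒮.mp hT).1]
      ring
    have e3 : 0 ≤ ∑ T ∈ 𝒮 m, F T * Uop (Dop F) T := by
      rcases m with _ | m''
      · refine le_of_eq (Finset.sum_eq_zero (fun T hT => ?_)).symm
        have hTA : T ∩ A = ∅ := card_eq_zero.mp (mem𝒮.mp hT).1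
        rw [hU]
        dsimp only
        rw [hTA, Finset.sum_empty, mul_zero]
      · have hadj' := hadj m'' (Dop F) F
        have comm : ∑ T ∈ 𝒮 (m''+1), F T * Uop (Dop F) T
            = ∑ T ∈ 𝒮 (m''+1), Uop (Dop F) T * F T :=
          Finset.sum_congr rfl (fun T _ => mul_comm _ _)
        rw [comm, hadj']
        exact Finset.sum_nonneg (fun T _ => mul_self_nonneg _)
    have hκ : (0:ℚ) < (A.card : ℚ) - 2*m := by
      have : (2*m : ℚ) < (A.card : ℚ) := by exact_mod_cast hm
      linarith
    have h0 : (0:ℚ) ≤ ∑ T ∈ 𝒮 m, F T * F T :=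
      Finset.sum_nonneg (fun T _ => mul_self_nonneg _)
    have hsq : ∑ T ∈ 𝒮 m, F T * F T = 0 := by nlinarith [e2 ▸ e4]
    have := (Finset.sum_eq_zero_iff_of_nonneg
      (fun T _ => mul_self_nonneg (F T))).mp hsq S₀ (mem𝒮.mpr hS₀)
    exact mul_self_eq_zero.mp this
  -- linear algebra packaging
  set Q₁ := Quot (orbRel G (P m)) with hQ₁
  set Q₂ := Quot (orbRel G (P (m+1))) with hQ₂
  have hPm_iff : ∀ (k : ℕ) (g : G) (S : Finset Ω), P k (g • S) ↔ P k S := by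
    intro k g S
    have fwd : ∀ (g : G) (S : Finset Ω), P k S → P k (g • S) := by
      intro g S hS
      constructor
      · rw [← hA g, ← smul_finset_inter, card_smul_finset]
        exact hS.1
      · rw [← hA g, ← smul_finset_sdiff]
        exact hR g _ hS.2
    constructor
    · intro h
      have := fwd g⁻¹ _ h
      rwa [inv_smul_smul] at this
    · exact fwd g S
  let ext : (Q₁ → ℚ) → Finset Ω → ℚ :=
    fun f S => if h : P m S then f (Quot.mk _ ⟨S, h⟩) else 0
  have hext_inv : ∀ (f : Q₁ → ℚ) (g : G) (S : Finset Ω), ext f (g • S) = ext f S := by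
    intro f g S
    simp only [ext]
    by_cases h : P m S
    · rw [dif_pos ((hPm_iff m g S).mpr h), dif_pos h]
      exact (congrArg f (Quot.sound ⟨g, rfl⟩)).symm
    · rw [dif_neg (fun h' => h ((hPm_iff m g S).mp h')), dif_neg h]
  have hUinv : ∀ (f : Finset Ω → ℚ), (∀ (g : G) (S : Finset Ω), f (g • S) = f S) →
      ∀ (g : G) (S : Finset Ω), Uop f (g • S) = Uop f S := by
    intro f hf g S
    rw [hU]
    dsimp only
    have him : (g • S) ∩ A = (S ∩ A).image (fun x => g • x) := by
      conv_lhs => rw [← hA g]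
      rw [← smul_finset_inter]
      exact smul_finset_def
    rw [him, Finset.sum_image (fun x _ y _ h => MulAction.injective g h)]
    refine Finset.sum_congr rfl (fun x hx => ?_)
    rw [← smul_finset_erase, hf g]
  have hLval : ∀ (f : Q₁ → ℚ) (S T : {S : Finset Ω // P (m+1) S}),
      orbRel G (P (m+1)) S T → Uop (ext f) S.val = Uop (ext f) T.val := by
    rintro f S T ⟨g, hg⟩
    rw [← hg]
    exact (hUinv (ext f) (hext_inv f) g S.val).symm
  let L : (Q₁ → ℚ) →ₗ[ℚ] (Q₂ → ℚ) :=
    { toFun := fun f => Quot.lift (fun S => Uop (ext f) S.val) (hLval f)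
      map_add' := by
        intro f₁ f₂
        funext q
        induction q using Quot.ind with
        | _ S =>
          show Uop (ext (f₁ + f₂)) S.val = Uop (ext f₁) S.val + Uop (ext f₂) S.val
          rw [hU]
          dsimp only
          rw [← Finset.sum_add_distrib]
          refine Finset.sum_congr rfl (fun x _ => ?_)
          by_cases h : P m (S.val.erase x)
          · simp only [ext, dif_pos h, Pi.add_apply]
          · simp only [ext, dif_neg h, add_zero]
      map_smul' := by
        intro c f
        funext q
        induction q using Quot.ind with
        | _ S =>
          show Uop (ext (c • f)) S.val = c • Uop (ext f) S.val
          rw [hU]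
          dsimp only
          rw [smul_eq_mul, Finset.mul_sum]
          refine Finset.sum_congr rfl (fun x _ => ?_)
          by_cases h : P m (S.val.erase x)
          · simp only [ext, dif_pos h, Pi.smul_apply, smul_eq_mul]
          · simp only [ext, dif_neg h, mul_zero] }
  have hL0 : ∀ f : Q₁ → ℚ, L f = 0 → f = 0 := by
    intro f hf
    have hvan : ∀ S, P (m+1) S → Uop (ext f) S = 0 := fun S h =>
      congrFun hf (Quot.mk _ ⟨S, h⟩)
    have hz := hkey (ext f) hvan
    funext q
    induction q using Quot.ind with
    | _ S =>
      have h2 := hz S.val S.2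
      simp only [ext] at h2
      rw [dif_pos S.2] at h2
      exact h2
  have hLinj : Function.Injective L := by
    intro f₁ f₂ h
    have : L (f₁ - f₂) = 0 := by rw [map_sub, h, sub_self]
    have := hL0 _ this
    exact sub_eq_zero.mp this
  haveI : Finite Q₁ := Quot.finite _
  haveI : Finite Q₂ := Quot.finite _
  haveI : Fintype Q₁ := Fintype.ofFinite _
  haveI : Fintype Q₂ := Fintype.ofFinite _
  show Nat.card Q₁ ≤ Nat.card Q₂
  rw [Nat.card_eq_fintype_card, Nat.card_eq_fintype_card,
    ← Module.finrank_fintype_fun_eq_card (R := ℚ) (η := Q₁),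
    ← Module.finrank_fintype_fun_eq_card (R := ℚ) (η := Q₂)]
  exact LinearMap.finrank_le_finrank_of_injective hLinj

end Infrastructure

set_option maxHeartbeats 2000000 in
open Finset in
/-- If `H ≤ S_n` (`n ≥ 8`) stabilizes the set `{n-1, n}` (the last two points, here
`a` and `b`) setwise, and `O_2(H) = ⋯ = O_d(H)` for some `3 ≤ d ≤ (n-2)/2`, then `H`
acts `d`-homogeneously on the remaining `n - 2` points. -/
theorem stmt10 (n d : ℕ) (hn : 8 ≤ n)
    (H : Subgroup (Equiv.Perm (Fin n))) (a b : Fin n)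
    (ha : (a : ℕ) = n - 2) (hb : (b : ℕ) = n - 1)
    (hstab : ∀ h ∈ H, h • ({a, b} : Finset (Fin n)) = {a, b})
    (hd1 : 3 ≤ d) (hd2 : 2 * d ≤ n - 2)
    (hO : ∀ k, 2 ≤ k → k ≤ d →
      numOrbits H (fun S : Finset (Fin n) => S.card = k)
        = numOrbits H (fun S : Finset (Fin n) => S.card = 2)) :
    IsHomogeneousOn H ({a, b} : Finset (Fin n))ᶜ d := by
  classical
  have hab : a ≠ b := by
    intro h
    have := congrArg Fin.val h
    omega
  set B : Finset (Fin n) := {a, b} with hBdef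
  set A : Finset (Fin n) := Bᶜ with hAdef
  have hBcard : B.card = 2 := by
    rw [hBdef, Finset.card_insert_of_notMem (by simp [hab]), Finset.card_singleton]
  have hAcard : A.card = n - 2 := by
    rw [hAdef, Finset.card_compl, hBcard, Fintype.card_fin]
  have hcoe : ∀ (g : ↥H) (S : Finset (Fin n)), g • S = (↑g : Equiv.Perm (Fin n)) • S :=
    fun _ _ => rfl
  have hB : ∀ g : ↥H, g • B = B := fun g => hstab ↑g g.2
  have hA : ∀ g : ↥H, g • A = A := fun g => by rw [hAdef, smul_finset_compl, hB]
  have haB : a ∈ B := by rw [hBdef]; exact mem_insert_self _ _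
  have hbB : b ∈ B := by rw [hBdef]; exact mem_insert_of_mem (mem_singleton_self _)
  have hmemB : ∀ (g : ↥H), ∀ x ∈ B, g • x ∈ B := fun g x hx => by
    rw [← hB g]; exact Finset.smul_mem_smul_finset hx
  have hABx : ∀ {x : Fin n}, x ∈ A → x ∈ B → False := fun {x} hx hxB => by
    rw [hAdef, Finset.mem_compl] at hx; exact hx hxB
  have hnAB : ∀ {x : Fin n}, x ∉ A → x ∈ B := fun {x} hx => by
    rw [hAdef, Finset.mem_compl, not_not] at hx; exact hx
  have hga : ∀ g : ↥H, g • a = a ∨ g • a = b := fun g => by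
    have := hmemB g a haB
    rw [hBdef, Finset.mem_insert, Finset.mem_singleton] at this
    exact this
  have hgb : ∀ g : ↥H, g • b = a ∨ g • b = b := fun g => by
    have := hmemB g b hbB
    rw [hBdef, Finset.mem_insert, Finset.mem_singleton] at this
    exact this
  have hsmul_inj : ∀ (g : ↥H) (x y : Fin n), g • x = g • y → x = y :=
    fun g x y h => MulAction.injective g h
  have hptA : ∀ (g : ↥H), ∀ x ∈ A, g • x ∈ A := fun g x hx => by
    rw [← hA g]; exact Finset.smul_mem_smul_finset hx
  have hIA : ∀ (g : ↥H) (S : Finset (Fin n)), (g • S) ∩ A = g • (S ∩ A) := fun g S => by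
    conv_lhs => rw [← hA g]
    rw [← smul_finset_inter]
  have hDA : ∀ (g : ↥H) (S : Finset (Fin n)), (g • S) \ A = g • (S \ A) := fun g S => by
    conv_lhs => rw [← hA g]
    rw [← smul_finset_sdiff]
  -- the predicate families
  set P0 : ℕ → Finset (Fin n) → Prop := fun m S => (S ∩ A).card = m ∧ S \ A = ∅ with hP0
  set P1 : ℕ → Finset (Fin n) → Prop := fun m S => (S ∩ A).card = m ∧ (S \ A).card = 1 with hP1
  set P2 : ℕ → Finset (Fin n) → Prop := fun m S => (S ∩ A).card = m ∧ S \ A = B with hP2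
  set aN : ℕ → ℕ := fun m => numOrbits ↥H (P0 m) with haN
  set tN : ℕ → ℕ := fun m => numOrbits ↥H (P1 m) with htN
  set cN : ℕ → ℕ := fun m => numOrbits ↥H (P2 m) with hcN
  -- monotonicity
  have mono0 : ∀ m, 2 * m < n - 2 → aN m ≤ aN (m + 1) := by
    intro m hm
    exact numOrbits_mono ↥H A hA (fun C => C = ∅)
      (by rintro g C rfl; exact Finset.smul_finset_empty g) m (by omega)
  have mono1 : ∀ m, 2 * m < n - 2 → tN m ≤ tN (m + 1) := by
    intro m hm
    exact numOrbits_mono ↥H A hA (fun C => C.card = 1)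
      (by intro g C h; rw [Finset.card_smul_finset]; exact h) m (by omega)
  have mono2 : ∀ m, 2 * m < n - 2 → cN m ≤ cN (m + 1) := by
    intro m hm
    exact numOrbits_mono ↥H A hA (fun C => C = B)
      (by rintro g C rfl; exact hB g) m (by omega)
  -- decomposition
  have decomp : ∀ m, numOrbits ↥H (fun S : Finset (Fin n) => S.card = m + 2)
      = aN (m + 2) + tN (m + 1) + cN m := by
    intro m
    refine numOrbits_partition ↥H _ (P0 (m + 2)) (P1 (m + 1)) (P2 m) ?_ ?_ ?_ ?_ ?_ ?_ ?_
    · intro S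
      have hsum : (S ∩ A).card + (S \ A).card = S.card := Finset.card_inter_add_card_sdiff S A
      have hsub : S \ A ⊆ B := fun x hx => hnAB (Finset.mem_sdiff.mp hx).2
      have hcard2 : (S \ A).card ≤ 2 := hBcard ▸ Finset.card_le_card hsub
      constructor
      · intro hS
        have h3 : (S \ A).card = 0 ∨ (S \ A).card = 1 ∨ (S \ A).card = 2 := by omega
        rcases h3 with h | h | h
        · exact Or.inl ⟨by omega, Finset.card_eq_zero.mp h⟩
        · exact Or.inr (Or.inl ⟨by omega, h⟩)
        · exact Or.inr (Or.inr ⟨by omega,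
            Finset.eq_of_subset_of_card_le hsub (by omega)⟩)
      · rintro (⟨h1, h2⟩ | ⟨h1, h2⟩ | ⟨h1, h2⟩)
        · have : (S \ A).card = 0 := by rw [h2]; exact Finset.card_empty
          omega
        · omega
        · have : (S \ A).card = 2 := by rw [h2]; exact hBcard
          omega
    · rintro S ⟨_, h2⟩ ⟨_, h2'⟩
      rw [h2] at h2'
      simp at h2'
    · rintro S ⟨_, h2⟩ ⟨_, h2'⟩
      rw [h2] at h2'
      rw [← h2'] at hBcard
      simp at hBcard
    · rintro S ⟨_, h2⟩ ⟨_, h2'⟩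
      rw [h2'] at h2
      omega
    · rintro g S ⟨h1, h2⟩
      exact ⟨by rw [hIA, Finset.card_smul_finset]; exact h1,
        by rw [hDA, h2]; exact Finset.smul_finset_empty g⟩
    · rintro g S ⟨h1, h2⟩
      exact ⟨by rw [hIA, Finset.card_smul_finset]; exact h1,
        by rw [hDA, Finset.card_smul_finset]; exact h2⟩
    · rintro g S ⟨h1, h2⟩
      exact ⟨by rw [hIA, Finset.card_smul_finset]; exact h1,
        by rw [hDA, h2]; exact hB g⟩
  -- c = a via bijection S ↦ S \ B  /  S ↦ S ∪ B
  have hsubA : ∀ {S : Finset (Fin n)}, S \ A = ∅ → S ⊆ A :=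
    fun {S} h => Finset.sdiff_eq_empty_iff_subset.mp h
  have hcup : ∀ X : Finset (Fin n), X ⊆ A → (X ∪ B) \ B = X := by
    intro X hXA
    ext x
    simp only [Finset.mem_sdiff, Finset.mem_union]
    constructor
    · rintro ⟨h1 | h1, h2⟩
      · exact h1
      · exact absurd h1 h2
    · intro hx
      exact ⟨Or.inl hx, fun hxB => hABx (hXA hx) hxB⟩
  have hSdB : ∀ T : Finset (Fin n), T \ B = T ∩ A := by
    intro T
    ext x
    simp only [Finset.mem_sdiff, Finset.mem_inter, hAdef, Finset.mem_compl]
  have hc_eq_a : ∀ m, cN m = aN m := by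
    intro m
    apply le_antisymm
    · refine card_quot_le_of_inj _ _ (orbRel_equivalence ↥H (P0 m))
        (fun S => ⟨S.val \ B, ?_, ?_⟩) ?_ ?_
      · rw [hSdB, Finset.inter_assoc, Finset.inter_self]
        exact S.2.1
      · rw [hSdB]
        ext x
        simp only [Finset.mem_sdiff, Finset.mem_inter, Finset.notMem_empty, iff_false]
        rintro ⟨⟨_, h2⟩, h3⟩
        exact h3 h2
      · rintro S T ⟨g, hg⟩
        exact ⟨g, by rw [smul_finset_sdiff, hB, hg]⟩
      · rintro S T ⟨g, hg⟩
        apply Quot.sound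
        refine ⟨g, ?_⟩
        have hBS : B ⊆ S.val := S.2.2 ▸ Finset.sdiff_subset
        have hBT : B ⊆ T.val := T.2.2 ▸ Finset.sdiff_subset
        have hS' : S.val \ B ∪ B = S.val := Finset.sdiff_union_of_subset hBS
        have hT' : T.val \ B ∪ B = T.val := Finset.sdiff_union_of_subset hBT
        rw [← hS', ← hT', smul_finset_union, hB, hg]
    · refine card_quot_le_of_inj _ _ (orbRel_equivalence ↥H (P2 m))
        (fun S => ⟨S.val ∪ B, ?_, ?_⟩) ?_ ?_
      · rw [Finset.union_inter_distrib_right]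
        have h1 : B ∩ A = ∅ := by
          ext x
          simp only [Finset.mem_inter, Finset.notMem_empty, iff_false]
          rintro ⟨h1, h2⟩
          exact hABx h2 h1
        rw [h1, Finset.union_empty]
        exact S.2.1
      · rw [Finset.union_sdiff_distrib, S.2.2, Finset.empty_union]
        ext x
        simp only [Finset.mem_sdiff, hAdef, Finset.mem_compl, not_not, and_self_iff]
      · rintro S T ⟨g, hg⟩
        exact ⟨g, by rw [smul_finset_union, hB, hg]⟩
      · rintro S T ⟨g, hg⟩
        apply Quot.sound
        refine ⟨g, ?_⟩
        have hgS : g • S.val ⊆ A := by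
          rw [← hA g]
          exact Finset.smul_finset_subset_smul_finset_iff.mpr (hsubA S.2.2)
        have := congrArg (fun X => X \ B) hg
        dsimp only at this
        rw [smul_finset_union, hB, hcup _ hgS, hcup _ (hsubA T.2.2)] at this
        exact this
  -- the chains
  have step : ∀ m, m + 3 ≤ d →
      aN (m + 2) = aN (m + 3) ∧ tN (m + 1) = tN (m + 2) ∧ cN m = cN (m + 1) := by
    intro m hmd
    have e1 : numOrbits ↥H (fun S : Finset (Fin n) => S.card = m + 2)
        = numOrbits ↥H (fun S : Finset (Fin n) => S.card = m + 3) := by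
      rw [hO (m + 2) (by omega) (by omega), hO (m + 3) (by omega) (by omega)]
    have e2 := decomp m
    have e3 : numOrbits ↥H (fun S : Finset (Fin n) => S.card = m + 3)
        = aN (m + 3) + tN (m + 2) + cN (m + 1) := decomp (m + 1)
    have m0 : aN (m + 2) ≤ aN (m + 3) := mono0 (m + 2) (by omega)
    have m1 : tN (m + 1) ≤ tN (m + 2) := mono1 (m + 1) (by omega)
    have m2 : cN m ≤ cN (m + 1) := mono2 m (by omega)
    have : aN (m + 2) + tN (m + 1) + cN m = aN (m + 3) + tN (m + 2) + cN (m + 1) := by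
      rw [← e2, ← e3, e1]
    omega
  have aN0 : aN 0 = 1 := by
    rw [haN]
    dsimp only
    rw [numOrbits_eq]
    rw [Nat.card_eq_one_iff_unique]
    constructor
    · constructor
      intro q q'
      induction q using Quot.ind with
      | _ S =>
        induction q' using Quot.ind with
        | _ T =>
          have hSe : S.val = ∅ := by
            have h1 := S.2.1
            have h2 := S.2.2
            have : S.val ⊆ A := hsubA h2
            have : S.val ∩ A = S.val := Finset.inter_eq_left.mpr this
            rw [this] at h1
            exact Finset.card_eq_zero.mp h1
          have hTe : T.val = ∅ := by
            have h1 := T.2.1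
            have h2 := T.2.2
            have : T.val ⊆ A := hsubA h2
            have : T.val ∩ A = T.val := Finset.inter_eq_left.mpr this
            rw [this] at h1
            exact Finset.card_eq_zero.mp h1
          apply Quot.sound
          exact ⟨1, by rw [one_smul, hSe, hTe]⟩
    · exact ⟨Quot.mk _ ⟨∅, by rw [hP0]; simp⟩⟩
  have chain_a : ∀ j, 2 ≤ j → j ≤ d → aN j = aN 2 := by
    intro j hj2
    induction j, hj2 using Nat.le_induction with
    | base =>
      intro _
      rfl
    | succ j hj ih =>
      intro hjd
      obtain ⟨m, rfl⟩ : ∃ m, j = m + 2 := ⟨j - 2, by omega⟩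
      have h1 : aN (m + 2 + 1) = aN (m + 2) := ((step m (by omega)).1).symm
      rw [h1]
      exact ih (by omega)
  -- small helpers
  have hIdA : ∀ Y : Finset (Fin n), (Y ∩ A) \ A = ∅ := by
    intro Y
    ext x
    simp only [Finset.mem_sdiff, Finset.mem_inter, Finset.notMem_empty, iff_false]
    rintro ⟨⟨_, h⟩, h'⟩
    exact h' h
  have hXsplit : ∀ X : Finset (Fin n), (X ∩ A) ∪ (X \ A) = X := by
    intro X
    ext x
    simp only [Finset.mem_union, Finset.mem_inter, Finset.mem_sdiff]
    tauto
  have hins_inj : ∀ (c : Fin n) (X Y : Finset (Fin n)), c ∉ X → c ∉ Y →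
      insert c X = insert c Y → X = Y := by
    intro c X Y hX hY h
    rw [← Finset.erase_insert hX, ← Finset.erase_insert hY, h]
  have hrec : ∀ {S : Finset (Fin n)} (c : Fin n), S \ A = {c} → S = insert c (S ∩ A) := by
    intro S c hc
    ext x
    constructor
    · intro hx
      by_cases hxA : x ∈ A
      · exact Finset.mem_insert_of_mem (Finset.mem_inter.mpr ⟨hx, hxA⟩)
      · have : x ∈ S \ A := Finset.mem_sdiff.mpr ⟨hx, hxA⟩
        rw [hc, Finset.mem_singleton] at this
        rw [this]
        exact Finset.mem_insert_self _ _
    · intro hx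
      rcases Finset.mem_insert.mp hx with rfl | hx
      · have : x ∈ S \ A := hc ▸ Finset.mem_singleton_self x
        exact (Finset.mem_sdiff.mp this).1
      · exact (Finset.mem_inter.mp hx).1
  have hins_sd : ∀ (c : Fin n), c ∈ B → ∀ {S : Finset (Fin n)}, S ⊆ A →
      insert c S \ A = {c} := by
    intro c hcB S hSA
    ext x
    simp only [Finset.mem_sdiff, Finset.mem_insert, Finset.mem_singleton]
    constructor
    · rintro ⟨rfl | hx, hxA⟩
      · rfl
      · exact absurd (hSA hx) hxA
    · rintro rfl
      exact ⟨Or.inl rfl, fun h => hABx h hcB⟩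
  have hP1B : ∀ {m : ℕ} {S : Finset (Fin n)}, P1 m S → S \ A = {a} ∨ S \ A = {b} := by
    intro m S hS
    obtain ⟨x, hx⟩ := Finset.card_eq_one.mp hS.2
    have hxB : x ∈ B := hnAB (Finset.mem_sdiff.mp (hx ▸ Finset.mem_singleton_self x)).2
    rw [hBdef, Finset.mem_insert, Finset.mem_singleton] at hxB
    rcases hxB with rfl | rfl
    · exact Or.inl hx
    · exact Or.inr hx
  -- aN 1 = 1 and transitivity on points of A
  have tc := step 0 (by omega)
  have aN1 : aN 1 = 1 := by
    have h1 : cN 0 = cN 1 := tc.2.2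
    rw [hc_eq_a 0, hc_eq_a 1] at h1
    rw [← h1]
    exact aN0
  have hP0sing : ∀ {x : Fin n}, x ∈ A → P0 1 {x} := by
    intro x hx
    refine ⟨?_, ?_⟩
    · rw [Finset.inter_eq_left.mpr (Finset.singleton_subset_iff.mpr hx)]
      exact Finset.card_singleton x
    · rw [Finset.sdiff_eq_empty_iff_subset]
      exact Finset.singleton_subset_iff.mpr hx
  have trans1 : ∀ x ∈ A, ∀ y ∈ A, ∃ g : ↥H, g • x = y := by
    intro x hx y hy
    obtain ⟨g, hg⟩ := orbEq_of_numOrbits_eq_one ↥H (P0 1) aN1 (hP0sing hx) (hP0sing hy)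
    refine ⟨g, ?_⟩
    rw [Finset.smul_finset_singleton] at hg
    exact Finset.singleton_injective hg
  -- THE KEY CLAIM: aN 2 = 1
  have key2 : aN 2 = 1 := by
    by_cases hsw : ∃ σ : ↥H, σ • a = b
    case neg =>
      have hfa : ∀ g : ↥H, g • a = a := fun g => (hga g).resolve_right (fun h => hsw ⟨g, h⟩)
      have hfb : ∀ g : ↥H, g • b = b := fun g =>
        (hgb g).resolve_left (fun h => hab (hsmul_inj g a b (by rw [hfa g, h])))
      have heqc : ∀ (c : Fin n), c ∈ B → (∀ g : ↥H, g • c = c) → ∀ m,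
          numOrbits ↥H (fun S : Finset (Fin n) => (S ∩ A).card = m ∧ S \ A = {c})
            = aN m := by
        intro c hcB hfc m
        apply le_antisymm
        · refine card_quot_le_of_inj _ _ (orbRel_equivalence ↥H (P0 m))
            (fun S => ⟨S.val ∩ A, ?_, hIdA S.val⟩) ?_ ?_
          · rw [Finset.inter_assoc, Finset.inter_self]
            exact S.2.1
          · rintro S T ⟨g, hg⟩
            exact ⟨g, by rw [← hIA, hg]⟩
          · rintro S T ⟨g, hg⟩
            apply Quot.sound
            refine ⟨g, ?_⟩
            rw [hrec c S.2.2, hrec c T.2.2, Finset.smul_finset_insert, hfc g, hg]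
        · refine card_quot_le_of_inj _ _
            (orbRel_equivalence ↥H (fun S => (S ∩ A).card = m ∧ S \ A = {c}))
            (fun S => ⟨insert c S.val, ?_, hins_sd c hcB (hsubA S.2.2)⟩) ?_ ?_
          · rw [Finset.insert_inter_of_notMem (fun h => hABx h hcB)]
            exact S.2.1
          · rintro S T ⟨g, hg⟩
            exact ⟨g, by rw [Finset.smul_finset_insert, hfc g, hg]⟩
          · rintro S T ⟨g, hg⟩
            apply Quot.sound
            refine ⟨g, ?_⟩
            rw [Finset.smul_finset_insert, hfc g] at hg
            have hgS : g • S.val ⊆ A := by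
              rw [← hA g]
              exact Finset.smul_finset_subset_smul_finset_iff.mpr (hsubA S.2.2)
            exact hins_inj c _ _ (fun h => hABx (hgS h) hcB)
              (fun h => hABx (hsubA T.2.2 h) hcB) hg
      have ht2a : ∀ m, tN m = 2 * aN m := by
        intro m
        have hpart : tN m
            = numOrbits ↥H (fun S : Finset (Fin n) => (S ∩ A).card = m ∧ S \ A = {a})
            + numOrbits ↥H (fun S : Finset (Fin n) => (S ∩ A).card = m ∧ S \ A = {b})
            + numOrbits ↥H (fun _ : Finset (Fin n) => False) := by
          refine numOrbits_partition ↥H _ _ _ _ ?_ ?_ ?_ ?_ ?_ ?_ ?_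
          · intro S
            constructor
            · intro hS
              rcases hP1B hS with h | h
              · exact Or.inl ⟨hS.1, h⟩
              · exact Or.inr (Or.inl ⟨hS.1, h⟩)
            · rintro (⟨h1, h2⟩ | ⟨h1, h2⟩ | h)
              · exact ⟨h1, by rw [h2]; exact Finset.card_singleton _⟩
              · exact ⟨h1, by rw [h2]; exact Finset.card_singleton _⟩
              · exact h.elim
          · rintro S ⟨_, h2⟩ ⟨_, h2'⟩
            rw [h2] at h2'
            exact hab (Finset.singleton_injective h2')
          · exact fun S _ h => h
          · exact fun S _ h => h
          · rintro g S ⟨h1, h2⟩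
            exact ⟨by rw [hIA, Finset.card_smul_finset]; exact h1,
              by rw [hDA, h2, Finset.smul_finset_singleton, hfa g]⟩
          · rintro g S ⟨h1, h2⟩
            exact ⟨by rw [hIA, Finset.card_smul_finset]; exact h1,
              by rw [hDA, h2, Finset.smul_finset_singleton, hfb g]⟩
          · exact fun g S h => h
        rw [numOrbits_false, heqc a haB hfa m, heqc b hbB hfb m] at hpart
        omega
      have h1 : tN 1 = tN 2 := tc.2.1
      rw [ht2a 1, ht2a 2, aN1] at h1
      omega
    case pos =>
      obtain ⟨σ, hσa⟩ := hsw
      have hσb : σ • b = a :=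
        (hgb σ).resolve_right (fun h => hab (hsmul_inj σ a b (hσa.trans h.symm)))
      have haA : a ∉ A := fun h => hABx h haB
      set K : Subgroup ↥H := MulAction.stabilizer ↥H a with hKdef
      have hKa : ∀ k : ↥K, (↑k : ↥H) • a = a := fun k => k.2
      have hkb : ∀ k : ↥K, (↑k : ↥H) • b = b := fun k =>
        (hgb ↑k).resolve_left (fun h => hab (hsmul_inj ↑k a b (by rw [hKa k, h])))
      set bN : ℕ → ℕ := fun m => numOrbits ↥K (P0 m) with hbNdef
      have hσia : σ⁻¹ • a = b := by rw [inv_smul_eq_iff, hσb]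
      have hσib : σ⁻¹ • b = a := by rw [inv_smul_eq_iff, hσa]
      set gsel : Finset (Fin n) → ↥H := fun S => if a ∈ S then (1 : ↥H) else σ⁻¹ with hgsel_def
      have hgsel : ∀ {m : ℕ} {S : Finset (Fin n)}, P1 m S → (gsel S • S) \ A = {a} := by
        intro m S hS
        rcases hP1B hS with h | h
        · have haS : a ∈ S := (Finset.mem_sdiff.mp (h ▸ Finset.mem_singleton_self a)).1
          rw [hgsel_def]
          dsimp only
          rw [if_pos haS, one_smul, h]
        · have haS : a ∉ S := fun haS => by
            have h2 : a ∈ S \ A := Finset.mem_sdiff.mpr ⟨haS, haA⟩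
            rw [h, Finset.mem_singleton] at h2
            exact hab h2
          rw [hgsel_def]
          dsimp only
          rw [if_neg haS, hDA, h, Finset.smul_finset_singleton, hσib]
      -- t_m = b_m
      have tb : ∀ m, tN m = bN m := by
        intro m
        apply le_antisymm
        · refine card_quot_le_of_inj _ _ (orbRel_equivalence ↥K (P0 m))
            (fun S => ⟨(gsel S.val • S.val) ∩ A, ?_, hIdA _⟩) ?_ ?_
          · rw [hIA, hIA, Finset.inter_assoc, Finset.inter_self, Finset.card_smul_finset]
            exact S.2.1
          · rintro S T ⟨g, hg⟩
            have hmem : gsel T.val * g * (gsel S.val)⁻¹ ∈ K := by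
              have hcomp : (gsel T.val * g * (gsel S.val)⁻¹) • ({a} : Finset (Fin n)) = {a} := by
                conv_lhs => rw [← hgsel S.2]
                rw [hDA, mul_smul, mul_smul, inv_smul_smul, ← hDA, hg, ← hDA, hgsel T.2]
              rw [Finset.smul_finset_singleton] at hcomp
              exact Finset.singleton_injective hcomp
            refine ⟨⟨gsel T.val * g * (gsel S.val)⁻¹, hmem⟩, ?_⟩
            show (gsel T.val * g * (gsel S.val)⁻¹) • ((gsel S.val • S.val) ∩ A)
              = (gsel T.val • T.val) ∩ A
            rw [← hIA, mul_smul, mul_smul, inv_smul_smul, hg]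
          · rintro S T ⟨k, hk⟩
            apply Quot.sound
            have hk' : (↑k : ↥H) • ((gsel S.val • S.val) ∩ A) = (gsel T.val • T.val) ∩ A := hk
            refine ⟨(gsel T.val)⁻¹ * ↑k * gsel S.val, ?_⟩
            have hS' : gsel S.val • S.val
                = ((gsel S.val • S.val) ∩ A) ∪ ((gsel S.val • S.val) \ A) :=
              (hXsplit _).symm
            have hT' : gsel T.val • T.val
                = ((gsel T.val • T.val) ∩ A) ∪ ((gsel T.val • T.val) \ A) :=
              (hXsplit _).symm
            rw [mul_smul, mul_smul]
            conv_lhs => rw [hS']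
            rw [hgsel S.2, smul_finset_union, hk', Finset.smul_finset_singleton, hKa k,
              ← hgsel T.2, ← hT', inv_smul_smul]
        · refine card_quot_le_of_inj _ _ (orbRel_equivalence ↥H (P1 m))
            (fun S => ⟨insert a S.val, ?_, by
              rw [hins_sd a haB (hsubA S.2.2)]; exact Finset.card_singleton a⟩) ?_ ?_
          · rw [Finset.insert_inter_of_notMem haA]
            exact S.2.1
          · rintro S T ⟨k, hk⟩
            have hk' : (↑k : ↥H) • S.val = T.val := hk
            exact ⟨↑k, by rw [Finset.smul_finset_insert, hKa k, hk']⟩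
          · rintro S T ⟨g, hg⟩
            apply Quot.sound
            have hg' : g • insert a S.val = insert a T.val := hg
            clear hg
            rename' hg' => hg
            have hga' : g • a = a := by
              have h1 : g • a ∈ insert a T.val := by
                rw [← hg]
                exact Finset.smul_mem_smul_finset (Finset.mem_insert_self a S.val)
              rcases Finset.mem_insert.mp h1 with h | h
              · exact h
              · exact absurd (hsubA T.2.2 h) (fun hA' => hABx hA' (hmemB g a haB))
            refine ⟨⟨g, hga'⟩, ?_⟩
            show g • S.val = T.val
            rw [Finset.smul_finset_insert, hga'] at hg
            have hgS : g • S.val ⊆ A := by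
              rw [← hA g]
              exact Finset.smul_finset_subset_smul_finset_iff.mpr (hsubA S.2.2)
            exact hins_inj a _ _ (fun h => hABx (hgS h) haB)
              (fun h => hABx (hsubA T.2.2 h) haB) hg
      -- pick a base point
      have hAne : A.Nonempty := Finset.card_pos.mp (by rw [hAcard]; omega)
      obtain ⟨x0, hx0⟩ := hAne
      have hσx0 : σ • x0 ∈ A := hptA σ x0 hx0
      have hsplit : ∀ y ∈ A, (∃ k : ↥K, (↑k : ↥H) • x0 = y)
          ∨ (∃ k : ↥K, (↑k : ↥H) • (σ • x0) = y) := by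
        intro y hy
        obtain ⟨g, hg⟩ := trans1 x0 hx0 y hy
        rcases hga g with h | h
        · exact Or.inl ⟨⟨g, h⟩, hg⟩
        · have hgb' : g • b = a :=
            (hgb g).resolve_right (fun h' => hab (hsmul_inj g a b (h.trans h'.symm)))
          refine Or.inr ⟨⟨g * σ⁻¹, ?_⟩, ?_⟩
          · show (g * σ⁻¹) • a = a
            rw [mul_smul, hσia, hgb']
          · show (g * σ⁻¹) • (σ • x0) = y
            rw [mul_smul, inv_smul_smul]
            exact hg
      have hP0pair : ∀ (u v : Fin n), u ∈ A → v ∈ A → u ≠ v → P0 2 ({u, v} : Finset (Fin n)) := by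
        intro u v hu hv huv
        have hsub : ({u, v} : Finset (Fin n)) ⊆ A := by
          intro z hz
          rcases Finset.mem_insert.mp hz with rfl | hz
          · exact hu
          · rw [Finset.mem_singleton.mp hz]
            exact hv
        refine ⟨?_, Finset.sdiff_eq_empty_iff_subset.mpr hsub⟩
        rw [Finset.inter_eq_left.mpr hsub, Finset.card_insert_of_notMem (by simp [huv]),
          Finset.card_singleton]
      -- classification of singleton orbits under K
      have hcls : ∀ S : {S : Finset (Fin n) // P0 1 S},
          (∃ k : ↥K, (↑k : ↥H) • ({x0} : Finset (Fin n)) = S.val)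
          ∨ (∃ k : ↥K, (↑k : ↥H) • ({σ • x0} : Finset (Fin n)) = S.val) := by
        intro S
        have hSA : S.val ⊆ A := hsubA S.2.2
        have hcard : S.val.card = 1 := by
          rw [← Finset.inter_eq_left.mpr hSA]
          exact S.2.1
        obtain ⟨y, hy⟩ := Finset.card_eq_one.mp hcard
        have hyA : y ∈ A := hSA (hy ▸ Finset.mem_singleton_self y)
        rcases hsplit y hyA with ⟨k, hk⟩ | ⟨k, hk⟩
        · exact Or.inl ⟨k, by rw [Finset.smul_finset_singleton, hk, hy]⟩
        · exact Or.inr ⟨k, by rw [Finset.smul_finset_singleton, hk, hy]⟩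
      have hx0P : P0 1 ({x0} : Finset (Fin n)) := hP0sing hx0
      have hσx0P : P0 1 ({σ • x0} : Finset (Fin n)) := hP0sing hσx0
      have hb12 : bN 1 = bN 2 := by
        have h1 := tc.2.1
        rw [tb 1, tb 2] at h1
        exact h1
      have hb1_pos : 1 ≤ bN 1 := by
        rw [hbNdef]
        dsimp only
        rw [numOrbits_eq]
        haveI : Nonempty (Quot (orbRel ↥K (P0 1))) := ⟨Quot.mk _ ⟨{x0}, hx0P⟩⟩
        exact Nat.card_pos
      have hb1_le : bN 1 ≤ 2 := by
        have hsurj : Function.Surjective (fun i : Bool =>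
            if i then Quot.mk (orbRel ↥K (P0 1)) ⟨{x0}, hx0P⟩
            else Quot.mk (orbRel ↥K (P0 1)) ⟨{σ • x0}, hσx0P⟩) := by
          intro q
          induction q using Quot.ind with
          | _ S =>
            rcases hcls S with ⟨k, hk⟩ | ⟨k, hk⟩
            · exact ⟨true, by simp only [if_pos]; exact Quot.sound ⟨k, hk⟩⟩
            · exact ⟨false, by simp only [if_neg]; exact Quot.sound ⟨k, hk⟩⟩
        calc bN 1 = Nat.card (Quot (orbRel ↥K (P0 1))) := rfl
          _ ≤ Nat.card Bool := Nat.card_le_card_of_surjective _ hsurj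
          _ = 2 := by rw [Nat.card_eq_fintype_card, Fintype.card_bool]
      have aN2_pos : 1 ≤ aN 2 := by
        obtain ⟨y1, hy1A, hy1⟩ : ∃ y1 ∈ A, y1 ≠ x0 := by
          have h2 : 1 < A.card := by rw [hAcard]; omega
          obtain ⟨u, hu, v, hv, huv⟩ := Finset.one_lt_card.mp h2
          by_cases h : u = x0
          · exact ⟨v, hv, fun hh => huv (h ▸ hh ▸ rfl)⟩
          · exact ⟨u, hu, h⟩
        rw [haN]
        dsimp only
        rw [numOrbits_eq]
        haveI : Nonempty (Quot (orbRel ↥H (P0 2))) :=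
          ⟨Quot.mk _ ⟨{y1, x0}, hP0pair y1 x0 hy1A hx0 hy1⟩⟩
        exact Nat.card_pos
      -- two cases on bN 1
      rcases (by omega : bN 1 = 1 ∨ bN 1 = 2) with hb1 | hb1
      · -- K is transitive, so also transitive on pairs
        have hb2 : bN 2 = 1 := by omega
        have hle : aN 2 ≤ bN 2 := by
          refine card_quot_le_of_surj _ _ (fun S => S) ?_ ?_
          · rintro S T ⟨k, hk⟩
            exact ⟨↑k, hk⟩
          · exact fun y => ⟨y, 1, one_smul _ _⟩
        omega
      · -- contradiction : there would be at least 3 orbits of pairs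
        exfalso
        set X : Finset (Fin n) := A.filter (fun y => ∃ k : ↥K, (↑k : ↥H) • x0 = y) with hXdef
        set Y : Finset (Fin n) := A.filter (fun y => ∃ k : ↥K, (↑k : ↥H) • (σ • x0) = y)
          with hYdef
        have hXsub : X ⊆ A := Finset.filter_subset _ _
        have hYsub : Y ⊆ A := Finset.filter_subset _ _
        have hcover : ∀ y ∈ A, y ∈ X ∨ y ∈ Y := by
          intro y hy
          rcases hsplit y hy with h | h
          · exact Or.inl (Finset.mem_filter.mpr ⟨hy, h⟩)
          · exact Or.inr (Finset.mem_filter.mpr ⟨hy, h⟩)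
        have hdisj : ∀ y, y ∈ X → y ∈ Y → False := by
          intro y hyX hyY
          obtain ⟨_, k1, hk1⟩ := Finset.mem_filter.mp hyX
          obtain ⟨_, k2, hk2⟩ := Finset.mem_filter.mp hyY
          -- then all singleton classes coincide and bN 1 ≤ 1
          have hXY : Quot.mk (orbRel ↥K (P0 1)) ⟨{σ • x0}, hσx0P⟩
              = Quot.mk (orbRel ↥K (P0 1)) ⟨{x0}, hx0P⟩ := by
            apply Quot.sound
            refine ⟨k1⁻¹ * k2, ?_⟩
            show (↑(k1⁻¹ * k2) : ↥H) • ({σ • x0} : Finset (Fin n)) = {x0}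
            rw [Subgroup.coe_mul, Subgroup.coe_inv, mul_smul, Finset.smul_finset_singleton,
              hk2, ← hk1, Finset.smul_finset_singleton, inv_smul_smul]
          have hall : Function.Surjective (fun _ : PUnit.{1} =>
              Quot.mk (orbRel ↥K (P0 1)) ⟨{x0}, hx0P⟩) := by
            intro q
            induction q using Quot.ind with
            | _ S =>
              refine ⟨PUnit.unit, ?_⟩
              rcases hcls S with ⟨k, hk⟩ | ⟨k, hk⟩
              · exact Quot.sound ⟨k, hk⟩
              · rw [← hXY]
                exact Quot.sound ⟨k, hk⟩
          have : bN 1 ≤ 1 := by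
            calc bN 1 = Nat.card (Quot (orbRel ↥K (P0 1))) := rfl
              _ ≤ Nat.card PUnit := Nat.card_le_card_of_surjective _ hall
              _ = 1 := Nat.card_unique
          omega
        have hKX : ∀ (k : ↥K), ∀ x ∈ X, (↑k : ↥H) • x ∈ X := by
          intro k x hx
          obtain ⟨hxA, k0, hk0⟩ := Finset.mem_filter.mp hx
          refine Finset.mem_filter.mpr ⟨hptA ↑k x hxA, k * k0, ?_⟩
          rw [Subgroup.coe_mul, mul_smul, hk0]
        have hKY : ∀ (k : ↥K), ∀ y ∈ Y, (↑k : ↥H) • y ∈ Y := by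
          intro k y hy
          obtain ⟨hyA, k0, hk0⟩ := Finset.mem_filter.mp hy
          refine Finset.mem_filter.mpr ⟨hptA ↑k y hyA, k * k0, ?_⟩
          rw [Subgroup.coe_mul, mul_smul, hk0]
        have hσX : ∀ x ∈ X, σ • x ∈ Y := by
          intro x hx
          obtain ⟨hxA, k, hk⟩ := Finset.mem_filter.mp hx
          refine Finset.mem_filter.mpr ⟨hptA σ x hxA, ⟨σ * ↑k * σ⁻¹, ?_⟩, ?_⟩
          · show (σ * ↑k * σ⁻¹) • a = a
            rw [mul_smul, mul_smul, hσia, hkb k, hσb]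
          · show (σ * ↑k * σ⁻¹) • (σ • x0) = σ • x
            rw [mul_smul, mul_smul, inv_smul_smul, hk]
        have hσY : ∀ y ∈ Y, σ • y ∈ X := by
          intro y hy
          obtain ⟨hyA, k, hk⟩ := Finset.mem_filter.mp hy
          refine Finset.mem_filter.mpr ⟨hptA σ y hyA, ⟨σ * ↑k * σ, ?_⟩, ?_⟩
          · show (σ * ↑k * σ) • a = a
            rw [mul_smul, mul_smul, hσa, hkb k, hσb]
          · show (σ * ↑k * σ) • x0 = σ • y
            rw [mul_smul, mul_smul, hk]
        have hcardXY : X.card = Y.card := by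
          apply le_antisymm
          · calc X.card = (X.image (fun x => σ • x)).card :=
                  (Finset.card_image_of_injective _ (MulAction.injective σ)).symm
              _ ≤ Y.card := Finset.card_le_card (fun z hz => by
                  obtain ⟨x, hx, rfl⟩ := Finset.mem_image.mp hz
                  exact hσX x hx)
          · calc Y.card = (Y.image (fun y => σ • y)).card :=
                  (Finset.card_image_of_injective _ (MulAction.injective σ)).symm
              _ ≤ X.card := Finset.card_le_card (fun z hz => by
                  obtain ⟨y, hy, rfl⟩ := Finset.mem_image.mp hz
                  exact hσY y hy)
        have hsum : X.card + Y.card = n - 2 := by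
          have hU : X ∪ Y = A := by
            apply Finset.Subset.antisymm (Finset.union_subset hXsub hYsub)
            intro y hy
            exact Finset.mem_union.mpr (hcover y hy)
          rw [← hAcard, ← hU,
            Finset.card_union_of_disjoint (Finset.disjoint_left.mpr (fun hy hyX => hdisj _ hyX))]
        have hX2 : 1 < X.card := by omega
        have hY2 : 1 < Y.card := by omega
        obtain ⟨x1, hx1, x2, hx2, hx12⟩ := Finset.one_lt_card.mp hX2
        obtain ⟨y1, hy1, y2, hy2, hy12⟩ := Finset.one_lt_card.mp hY2
        have hx1A := hXsub hx1
        have hx2A := hXsub hx2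
        have hy1A := hYsub hy1
        have hy2A := hYsub hy2
        have hxy : x1 ≠ y1 := fun h => hdisj y1 (h ▸ hx1) hy1
        -- three distinct classes of pairs
        set q1 := Quot.mk (orbRel ↥K (P0 2)) ⟨{x1, x2}, hP0pair x1 x2 hx1A hx2A hx12⟩ with hq1
        set q2 := Quot.mk (orbRel ↥K (P0 2)) ⟨{y1, y2}, hP0pair y1 y2 hy1A hy2A hy12⟩ with hq2
        set q3 := Quot.mk (orbRel ↥K (P0 2)) ⟨{x1, y1}, hP0pair x1 y1 hx1A hy1A hxy⟩ with hq3
        have hpair_mem : ∀ (k : ↥K) (u v z : Fin n),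
            z ∈ (↑k : ↥H) • ({u, v} : Finset (Fin n)) →
            z = (↑k : ↥H) • u ∨ z = (↑k : ↥H) • v := by
          intro k u v z hz
          rw [Finset.smul_finset_insert, Finset.smul_finset_singleton] at hz
          rcases Finset.mem_insert.mp hz with h | h
          · exact Or.inl h
          · exact Or.inr (Finset.mem_singleton.mp h)
        have hq13 : q1 ≠ q3 := by
          intro h
          obtain ⟨k, hk⟩ := ((orbRel_equivalence ↥K (P0 2)).eqvGen_iff).mp (Quot.eq.mp h)
          have : y1 ∈ (↑k : ↥H) • ({x1, x2} : Finset (Fin n)) := by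
            rw [show ((k : ↥K) • ({x1, x2} : Finset (Fin n))) = (↑k : ↥H) • ({x1, x2} : Finset (Fin n)) from rfl] at hk
            rw [hk]
            exact Finset.mem_insert_of_mem (Finset.mem_singleton_self y1)
          rcases hpair_mem k x1 x2 y1 this with h' | h'
          · exact hdisj y1 (h' ▸ hKX k x1 hx1) hy1
          · exact hdisj y1 (h' ▸ hKX k x2 hx2) hy1
        have hq23 : q2 ≠ q3 := by
          intro h
          obtain ⟨k, hk⟩ := ((orbRel_equivalence ↥K (P0 2)).eqvGen_iff).mp (Quot.eq.mp h)
          have : x1 ∈ (↑k : ↥H) • ({y1, y2} : Finset (Fin n)) := by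
            rw [show ((k : ↥K) • ({y1, y2} : Finset (Fin n))) = (↑k : ↥H) • ({y1, y2} : Finset (Fin n)) from rfl] at hk
            rw [hk]
            exact Finset.mem_insert_self x1 {y1}
          rcases hpair_mem k y1 y2 x1 this with h' | h'
          · exact hdisj x1 hx1 (h' ▸ hKY k y1 hy1)
          · exact hdisj x1 hx1 (h' ▸ hKY k y2 hy2)
        have hq12 : q1 ≠ q2 := by
          intro h
          obtain ⟨k, hk⟩ := ((orbRel_equivalence ↥K (P0 2)).eqvGen_iff).mp (Quot.eq.mp h)
          have : y1 ∈ (↑k : ↥H) • ({x1, x2} : Finset (Fin n)) := by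
            rw [show ((k : ↥K) • ({x1, x2} : Finset (Fin n))) = (↑k : ↥H) • ({x1, x2} : Finset (Fin n)) from rfl] at hk
            rw [hk]
            exact Finset.mem_insert_self y1 {y2}
          rcases hpair_mem k x1 x2 y1 this with h' | h'
          · exact hdisj y1 (h' ▸ hKX k x1 hx1) hy1
          · exact hdisj y1 (h' ▸ hKX k x2 hx2) hy1
        have h3le : 3 ≤ bN 2 := by
          haveI : Fintype (Quot (orbRel ↥K (P0 2))) := Fintype.ofFinite _
          have h2lt : 2 < Fintype.card (Quot (orbRel ↥K (P0 2))) :=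
            Fintype.two_lt_card_iff.mpr ⟨q1, q2, q3, hq12, hq13, hq23⟩
          calc 3 ≤ Fintype.card (Quot (orbRel ↥K (P0 2))) := h2lt
            _ = Nat.card (Quot (orbRel ↥K (P0 2))) := (Nat.card_eq_fintype_card).symm
            _ = bN 2 := rfl
        omega
  -- conclusion
  have aNd : aN d = 1 := by
    rw [chain_a d (by omega) le_rfl]
    exact key2
  intro S T hSA hTA hS hT
  have hPS : P0 d S := ⟨by rw [Finset.inter_eq_left.mpr hSA]; exact hS,
    Finset.sdiff_eq_empty_iff_subset.mpr hSA⟩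
  have hPT : P0 d T := ⟨by rw [Finset.inter_eq_left.mpr hTA]; exact hT,
    Finset.sdiff_eq_empty_iff_subset.mpr hTA⟩
  obtain ⟨g, hg⟩ := orbEq_of_numOrbits_eq_one ↥H (P0 d) aNd hPS hPT
  exact ⟨↑g, g.2, hg⟩
end

section
/- Let m ≥ 5 and let S = Sym(Fin m) and T = Sym(Fin 2). Let H ≤ S × T be a subgroup whose projection to T is surjective. If the projection of H to S equals S, then H = S × T or H = {(σ, τ) ∈ S × T : sgn(σ) = sgn(τ)}. If the projection of H to S equals the alternating group Alt(Fin m), then H = Alt(Fin m) × T. -/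
open Equiv Equiv.Perm

lemma aux_main13 (m : ℕ) (hm : 5 ≤ m)
    (H : Subgroup (Equiv.Perm (Fin m) × Equiv.Perm (Fin 2)))
    (hfst : alternatingGroup (Fin m) ≤
      H.map (MonoidHom.fst (Equiv.Perm (Fin m)) (Equiv.Perm (Fin 2)))) :
    ∀ σ ∈ alternatingGroup (Fin m), (σ, (1 : Equiv.Perm (Fin 2))) ∈ H := by
  obtain ⟨x0, x1, x2, x3, x4, h01, h02, h03, h04, h12, h13, h14, h23, h24, h34⟩ :
      ∃ x0 x1 x2 x3 x4 : Fin m, x0 ≠ x1 ∧ x0 ≠ x2 ∧ x0 ≠ x3 ∧ x0 ≠ x4 ∧ x1 ≠ x2 ∧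
        x1 ≠ x3 ∧ x1 ≠ x4 ∧ x2 ≠ x3 ∧ x2 ≠ x4 ∧ x3 ≠ x4 :=
    ⟨⟨0, by omega⟩, ⟨1, by omega⟩, ⟨2, by omega⟩, ⟨3, by omega⟩, ⟨4, by omega⟩,
      Fin.ne_of_val_ne (by norm_num), Fin.ne_of_val_ne (by norm_num),
      Fin.ne_of_val_ne (by norm_num), Fin.ne_of_val_ne (by norm_num),
      Fin.ne_of_val_ne (by norm_num), Fin.ne_of_val_ne (by norm_num),
      Fin.ne_of_val_ne (by norm_num), Fin.ne_of_val_ne (by norm_num),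
      Fin.ne_of_val_ne (by norm_num), Fin.ne_of_val_ne (by norm_num)⟩
  have hf3 : IsThreeCycle (Equiv.swap x2 x3 * Equiv.swap x3 x4) := by
    rw [Equiv.swap_comm x2 x3]
    exact isThreeCycle_swap_mul_swap_same h23.symm h34 h24
  have haA : Equiv.swap x0 x1 * Equiv.swap x2 x3 ∈ alternatingGroup (Fin m) := by
    rw [mem_alternatingGroup, map_mul, sign_swap h01, sign_swap h23]
    decide
  have hfA : Equiv.swap x2 x3 * Equiv.swap x3 x4 ∈ alternatingGroup (Fin m) :=
    hf3.mem_alternatingGroup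
  have hcomm : (Equiv.swap x0 x1 * Equiv.swap x2 x3) * (Equiv.swap x2 x3 * Equiv.swap x3 x4) *
      (Equiv.swap x0 x1 * Equiv.swap x2 x3)⁻¹ * (Equiv.swap x2 x3 * Equiv.swap x3 x4)⁻¹ =
      Equiv.swap x2 x3 * Equiv.swap x3 x4 := by
    ext z
    simp only [mul_inv_rev, Equiv.swap_inv, Equiv.Perm.mul_apply]
    by_cases hz0 : z = x0
    · subst hz0
      simp [Equiv.swap_apply_of_ne_of_ne, h01, h02, h03, h04, h12, h13, h14, h23, h24, h34,
        h01.symm, h02.symm, h03.symm, h04.symm, h12.symm, h13.symm, h14.symm,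
        h23.symm, h24.symm, h34.symm]
    by_cases hz1 : z = x1
    · subst hz1
      simp [Equiv.swap_apply_of_ne_of_ne, h01, h02, h03, h04, h12, h13, h14, h23, h24, h34,
        h01.symm, h02.symm, h03.symm, h04.symm, h12.symm, h13.symm, h14.symm,
        h23.symm, h24.symm, h34.symm]
    by_cases hz2 : z = x2
    · subst hz2
      simp [Equiv.swap_apply_of_ne_of_ne, h01, h02, h03, h04, h12, h13, h14, h23, h24, h34,
        h01.symm, h02.symm, h03.symm, h04.symm, h12.symm, h13.symm, h14.symm,
        h23.symm, h24.symm, h34.symm]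
    by_cases hz3 : z = x3
    · subst hz3
      simp [Equiv.swap_apply_of_ne_of_ne, h01, h02, h03, h04, h12, h13, h14, h23, h24, h34,
        h01.symm, h02.symm, h03.symm, h04.symm, h12.symm, h13.symm, h14.symm,
        h23.symm, h24.symm, h34.symm]
    by_cases hz4 : z = x4
    · subst hz4
      simp [Equiv.swap_apply_of_ne_of_ne, h01, h02, h03, h04, h12, h13, h14, h23, h24, h34,
        h01.symm, h02.symm, h03.symm, h04.symm, h12.symm, h13.symm, h14.symm,
        h23.symm, h24.symm, h34.symm]
    · simp [Equiv.swap_apply_of_ne_of_ne, hz0, hz1, hz2, hz3, hz4]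
  have hTcomm : ∀ α β : Equiv.Perm (Fin 2), α * β * α⁻¹ * β⁻¹ = 1 := by decide
  -- (f, 1) ∈ H
  have hfH : ((Equiv.swap x2 x3 * Equiv.swap x3 x4, (1 : Equiv.Perm (Fin 2))) :
      Equiv.Perm (Fin m) × Equiv.Perm (Fin 2)) ∈ H := by
    obtain ⟨p, hp, hp1⟩ := Subgroup.mem_map.mp (hfst haA)
    obtain ⟨q, hq, hq1⟩ := Subgroup.mem_map.mp (hfst hfA)
    have hmem := H.mul_mem (H.mul_mem (H.mul_mem hp hq) (H.inv_mem hp)) (H.inv_mem hq)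
    have heq : p * q * p⁻¹ * q⁻¹ =
        (Equiv.swap x2 x3 * Equiv.swap x3 x4, (1 : Equiv.Perm (Fin 2))) := by
      rw [Prod.ext_iff]
      constructor
      · simp only [Prod.fst_mul, Prod.fst_inv]
        rw [show p.1 = Equiv.swap x0 x1 * Equiv.swap x2 x3 from hp1,
          show q.1 = Equiv.swap x2 x3 * Equiv.swap x3 x4 from hq1]
        exact hcomm
      · simp only [Prod.snd_mul, Prod.snd_inv]
        exact hTcomm p.2 q.2
    rwa [heq] at hmem
  -- the subgroup of pairs (σ, 1)
  set N : Subgroup (Equiv.Perm (Fin m)) :=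
    H.comap (MonoidHom.inl (Equiv.Perm (Fin m)) (Equiv.Perm (Fin 2))) with hN
  have hmemN : ∀ σ : Equiv.Perm (Fin m),
      σ ∈ N ↔ (σ, (1 : Equiv.Perm (Fin 2))) ∈ H := by
    intro σ
    rw [hN, Subgroup.mem_comap, MonoidHom.inl_apply]
  set K : Subgroup (alternatingGroup (Fin m)) :=
    (N ⊓ alternatingGroup (Fin m)).subgroupOf (alternatingGroup (Fin m)) with hK
  have hKnormal : K.Normal := by
    refine ⟨fun n hn g => ?_⟩
    rw [hK, Subgroup.mem_subgroupOf, Subgroup.mem_inf] at hn ⊢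
    obtain ⟨hnN, hnA⟩ := hn
    refine ⟨?_, ?_⟩
    · obtain ⟨p, hp, hp1⟩ := Subgroup.mem_map.mp (hfst g.2)
      rw [hmemN] at hnN ⊢
      have hmem := H.mul_mem (H.mul_mem hp hnN) (H.inv_mem hp)
      have heq : p * ((n : Equiv.Perm (Fin m)), (1 : Equiv.Perm (Fin 2))) * p⁻¹ =
          (((g * n * g⁻¹ : alternatingGroup (Fin m)) : Equiv.Perm (Fin m)),
            (1 : Equiv.Perm (Fin 2))) := by
        rw [Prod.ext_iff]
        constructor
        · simp only [Prod.fst_mul, Prod.fst_inv, Subgroup.coe_mul, Subgroup.coe_inv]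
          rw [show p.1 = (g : Equiv.Perm (Fin m)) from hp1]
        · simp
      rwa [heq] at hmem
    · exact Subgroup.mul_mem _ (Subgroup.mul_mem _ g.2 hnA) (Subgroup.inv_mem _ g.2)
  have hKtop : K = ⊤ := by
    have h5 : 5 ≤ Nat.card (Fin m) := by simpa using hm
    have hcl := hf3.alternating_normalClosure h5
    refine top_unique ?_
    rw [← hcl]
    refine Subgroup.normalClosure_le_normal ?_
    rw [Set.singleton_subset_iff, SetLike.mem_coe, hK, Subgroup.mem_subgroupOf]
    exact ⟨(hmemN _).mpr hfH, hfA⟩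
  intro σ hσ
  have : (⟨σ, hσ⟩ : alternatingGroup (Fin m)) ∈ K := hKtop ▸ Subgroup.mem_top _
  rw [hK, Subgroup.mem_subgroupOf] at this
  exact (hmemN σ).mp this.1

/-- Goursat-type classification: let `m ≥ 5`, `S = Sym(Fin m)`, `T = Sym(Fin 2)`, and
`H ≤ S × T` a subgroup with surjective projection to `T`. If the projection of `H` to `S`
is all of `S`, then `H = S × T` or `H` is the fiber product
`{(σ, τ) : sgn σ = sgn τ}`. If the projection of `H` to `S` is `Alt(Fin m)`, then
`H = Alt(Fin m) × T`. -/
theorem stmt13 (m : ℕ) (hm : 5 ≤ m)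
    (H : Subgroup (Equiv.Perm (Fin m) × Equiv.Perm (Fin 2)))
    (hsnd : H.map (MonoidHom.snd (Equiv.Perm (Fin m)) (Equiv.Perm (Fin 2))) = ⊤) :
    ((H.map (MonoidHom.fst (Equiv.Perm (Fin m)) (Equiv.Perm (Fin 2))) = ⊤) →
      (H = ⊤ ∨ (H : Set (Equiv.Perm (Fin m) × Equiv.Perm (Fin 2)))
          = {p | Equiv.Perm.sign p.1 = Equiv.Perm.sign p.2})) ∧
    ((H.map (MonoidHom.fst (Equiv.Perm (Fin m)) (Equiv.Perm (Fin 2)))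
        = alternatingGroup (Fin m)) →
      H = (alternatingGroup (Fin m)).prod (⊤ : Subgroup (Equiv.Perm (Fin 2)))) := by
  have s2 : ∀ τ : Equiv.Perm (Fin 2), τ = 1 ∨ τ = Equiv.swap 0 1 := by decide
  have hssign : Equiv.Perm.sign (Equiv.swap (0 : Fin 2) 1) = -1 :=
    Equiv.Perm.sign_swap (by decide)
  have hsne : Equiv.swap (0 : Fin 2) 1 ≠ 1 := by decide
  -- extract an element (ρ, swap 0 1) ∈ H
  obtain ⟨⟨ρ, τρ⟩, hρH, hρ2⟩ :=
    Subgroup.mem_map.mp (hsnd ▸ Subgroup.mem_top (Equiv.swap (0 : Fin 2) 1))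
  simp only [MonoidHom.coe_snd] at hρ2
  subst hρ2
  constructor
  · intro hfst1
    have hA : ∀ σ ∈ alternatingGroup (Fin m), (σ, (1 : Equiv.Perm (Fin 2))) ∈ H :=
      aux_main13 m hm H (by rw [hfst1]; exact le_top)
    have hA' : ∀ σ : Equiv.Perm (Fin m), Equiv.Perm.sign σ = 1 →
        (σ, (1 : Equiv.Perm (Fin 2))) ∈ H := fun σ hσ =>
      hA σ (Equiv.Perm.mem_alternatingGroup.mpr hσ)
    by_cases h1s : ((1 : Equiv.Perm (Fin m)), Equiv.swap (0 : Fin 2) 1) ∈ H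
    · left
      rw [eq_top_iff]
      rintro ⟨σ, τ⟩ -
      obtain ⟨p, hp, hp1⟩ := Subgroup.mem_map.mp (hfst1 ▸ Subgroup.mem_top σ)
      simp only [MonoidHom.coe_fst] at hp1
      have hστ' : (σ, p.2) ∈ H := by
        rwa [show (σ, p.2) = p from Prod.ext hp1.symm rfl]
      rcases s2 (p.2⁻¹ * τ) with h | h
      · have hτ : τ = p.2 := by
          have := congrArg (p.2 * ·) h
          simpa [mul_assoc] using this
        rw [hτ]; exact hστ'
      · have : (σ, τ) = (σ, p.2) * (1, Equiv.swap (0 : Fin 2) 1) := by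
          rw [Prod.mk_mul_mk, mul_one, ← h, mul_inv_cancel_left]
        rw [this]; exact H.mul_mem hστ' h1s
    · right
      have key1 : ∀ σ τ', ((σ, τ') ∈ H) → Equiv.Perm.sign σ = 1 → τ' = 1 := by
        intro σ τ' hστ hσ
        rcases s2 τ' with h | h
        · exact h
        exfalso
        apply h1s
        have hinv : (σ⁻¹, (1 : Equiv.Perm (Fin 2))) ∈ H := hA' σ⁻¹ (by simp [hσ])
        have := H.mul_mem hστ hinv
        simpa [Prod.mk_mul_mk, h] using this
      have key2 : ∀ σ τ', ((σ, τ') ∈ H) → Equiv.Perm.sign σ = -1 →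
          τ' = Equiv.swap (0 : Fin 2) 1 := by
        intro σ τ' hστ hσ
        rcases s2 τ' with h | h
        swap
        · exact h
        exfalso
        subst h
        -- (σ, 1) ∈ H with σ odd
        have hρodd : Equiv.Perm.sign ρ = -1 := by
          rcases Int.units_eq_one_or (Equiv.Perm.sign ρ) with h' | h'
          · exact absurd (key1 ρ _ hρH h') hsne
          · exact h'
        have h1 : (ρ * σ⁻¹, (1 : Equiv.Perm (Fin 2))) ∈ H :=
          hA' _ (by simp [hρodd, hσ])
        have h2 := H.mul_mem h1 hστ
        have h3 : (ρ, (1 : Equiv.Perm (Fin 2))) ∈ H := by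
          simpa [Prod.mk_mul_mk, mul_assoc] using h2
        apply h1s
        have := H.mul_mem (H.inv_mem h3) hρH
        simpa [Prod.mk_mul_mk] using this
      ext ⟨σ, τ⟩
      simp only [SetLike.mem_coe, Set.mem_setOf_eq]
      constructor
      · intro hστ
        rcases Int.units_eq_one_or (Equiv.Perm.sign σ) with h | h
        · rw [h, key1 σ τ hστ h]; simp
        · rw [h, key2 σ τ hστ h, hssign]
      · intro hsgn
        rcases s2 τ with rfl | rfl
        · exact hA' σ (by simpa using hsgn)
        · have hσ : Equiv.Perm.sign σ = -1 := by rwa [hssign] at hsgn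
          have hρodd : Equiv.Perm.sign ρ = -1 := by
            rcases Int.units_eq_one_or (Equiv.Perm.sign ρ) with h' | h'
            · exact absurd (key1 ρ _ hρH h') hsne
            · exact h'
          have h1 : (σ * ρ⁻¹, (1 : Equiv.Perm (Fin 2))) ∈ H :=
            hA' _ (by simp [hρodd, hσ])
          have := H.mul_mem h1 hρH
          simpa [Prod.mk_mul_mk, mul_assoc] using this
  · intro hfst2
    have hA : ∀ σ ∈ alternatingGroup (Fin m), (σ, (1 : Equiv.Perm (Fin 2))) ∈ H :=
      aux_main13 m hm H (le_of_eq hfst2.symm)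
    have hρA : ρ ∈ alternatingGroup (Fin m) := by
      rw [← hfst2]
      exact Subgroup.mem_map.mpr ⟨(ρ, Equiv.swap 0 1), hρH, rfl⟩
    have h1s : ((1 : Equiv.Perm (Fin m)), Equiv.swap (0 : Fin 2) 1) ∈ H := by
      have hinv : (ρ⁻¹, (1 : Equiv.Perm (Fin 2))) ∈ H :=
        hA ρ⁻¹ (Subgroup.inv_mem _ hρA)
      have := H.mul_mem hinv hρH
      simpa [Prod.mk_mul_mk] using this
    refine le_antisymm (fun p hp => ?_) (fun p hp => ?_)
    · obtain ⟨σ, τ⟩ := p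
      rw [Subgroup.mem_prod]
      refine ⟨?_, trivial⟩
      rw [← hfst2]
      exact Subgroup.mem_map.mpr ⟨(σ, τ), hp, rfl⟩
    · obtain ⟨σ, τ⟩ := p
      rw [Subgroup.mem_prod] at hp
      have hσ : (σ, (1 : Equiv.Perm (Fin 2))) ∈ H := hA σ hp.1
      rcases s2 τ with rfl | rfl
      · exact hσ
      · have := H.mul_mem hσ h1s
        simpa [Prod.mk_mul_mk] using this
end
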